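/- arXiv:1205.3522 — 5 statements merged into one kernel-verified Lean document; each statement's English description precedes it below -/
import Mathlib

section
/- Let V be a set with coloring f : [V]² → M satisfying property (3), where M is a linear order in which every strictly increasing κ⁺-sequence is cofinal in no proper initial segment containing all colors used (specifically: any strictly increasing sequence of length κ⁺ in M eventually exceeds any fixed element of M). Then for any selector sequence ⟨A_α : α < κ⁺⟩ (defined by A₀ ⊆ V, A_λ = ⋂_{α<λ} A_α at limits, and A_{α+1} = {v ∈ A_α : f{v, v_α} = λ_α} for some chosen v_α ∈ A_α and strictly increasing colors λ_α), the intersection ⋂_{α<κ⁺} A_α has at most one element. -/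
/-- For any selector sequence `⟨A_α : α < κ⁺⟩` (built by choosing vertices `v_α` and
strictly increasing, cofinal colors `λ_α`), the intersection `⋂_{α<κ⁺} A_α` has at
most one element. -/
theorem stmt5 {V M : Type u} [LinearOrder M] (f : V → V → M)
    (hsymm : ∀ a b : V, f a b = f b a)
    (h3 : ∀ a₀ a₁ a₂ : V, a₀ ≠ a₁ → a₀ ≠ a₂ → a₁ ≠ a₂ →
      (f a₀ a₁ ≠ f a₀ a₂ → f a₁ a₂ = min (f a₀ a₁) (f a₀ a₂)) ∧
      (f a₀ a₁ = f a₀ a₂ → f a₀ a₁ < f a₁ a₂))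
    (κ : Cardinal.{u}) (hκ : Cardinal.aleph0 ≤ κ)
    (A : Ordinal.{u} → Set V) (v : Ordinal.{u} → V) (lam : Ordinal.{u} → M)
    -- at limit stages, take intersections
    (hlim : ∀ α < (Order.succ κ).ord, Order.IsSuccLimit α → A α = ⋂ β ∈ Set.Iio α, A β)
    -- at successor stages, select those vertices whose edge to `v α` has color `lam α`
    (hsucc : ∀ α, α + 1 < (Order.succ κ).ord →
      (A α = ∅ → A (α + 1) = ∅) ∧
      ((A α).Nonempty → v α ∈ A α ∧
        A (α + 1) = {x ∈ A α | x ≠ v α ∧ f x (v α) = lam α}))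
    -- the colors are strictly increasing
    (hmono : ∀ α β, α < β → β < (Order.succ κ).ord → lam α < lam β)
    -- an increasing κ⁺-sequence of colors is cofinal in `M`
    (hcof : ∀ m : M, ∃ α < (Order.succ κ).ord, m < lam α) :
    Set.Subsingleton (⋂ α ∈ Set.Iio (Order.succ κ).ord, A α) := by
  intro x hx y hy
  by_contra hxy
  obtain ⟨α, hα, hm⟩ := hcof (f x y)
  have hord : Order.IsSuccLimit (Order.succ κ).ord := Cardinal.isSuccLimit_ord (hκ.trans (le_of_lt (Order.lt_succ κ)))
  have hα1 : α + 1 < (Order.succ κ).ord := by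
    rw [Ordinal.add_one_eq_succ]; exact hord.succ_lt hα
  have hxα1 : x ∈ A (α + 1) := by
    simp only [Set.mem_iInter] at hx; exact hx (α+1) hα1
  have hyα1 : y ∈ A (α + 1) := by
    simp only [Set.mem_iInter] at hy; exact hy (α+1) hα1
  have hxα : x ∈ A α := by
    simp only [Set.mem_iInter] at hx; exact hx α hα
  have hne : (A α).Nonempty := ⟨x, hxα⟩
  obtain ⟨hv, hA⟩ := (hsucc α hα1).2 hne
  rw [hA] at hxα1 hyα1
  obtain ⟨-, hxv, hfx⟩ := hxα1
  obtain ⟨-, hyv, hfy⟩ := hyα1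
  have h := (h3 (v α) x y (Ne.symm hxv) (Ne.symm hyv) hxy).2
  rw [← hsymm x (v α), ← hsymm y (v α), hfx, hfy] at h
  exact absurd (h rfl) (not_lt_of_gt hm)
end

section
/- The class K of finite structures (V, f) over a fixed countable colored linear order M—where V is a finite vertex set and f : [V]² → M satisfies property (3)—has the joint embedding property: if A ∈ K embeds into both B ∈ K and C ∈ K with B ∩ C = A, then f can be extended to B ∪ C so that the result is in K. -/
/-- Property (3) of the paper, restricted to a set `S` of vertices. -/
def Prop3On {V M : Type*} [LinearOrder M] (f : V → V → M) (S : Set V) : Prop :=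
  ∀ a₀ ∈ S, ∀ a₁ ∈ S, ∀ a₂ ∈ S, a₀ ≠ a₁ → a₀ ≠ a₂ → a₁ ≠ a₂ →
    (f a₀ a₁ ≠ f a₀ a₂ → f a₁ a₂ = min (f a₀ a₁) (f a₀ a₂)) ∧
    (f a₀ a₁ = f a₀ a₂ → f a₀ a₁ < f a₁ a₂)

namespace Stmt8

variable {V M : Type*} [LinearOrder M]

/-- the triple of values is "isoceles": two equal values, strictly below the third -/
def Iso (u v w : M) : Prop := (u = v ∧ u < w) ∨ (u = w ∧ u < v) ∨ (v = w ∧ v < u)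

lemma iso_swap12 {u v w : M} (h : Iso u v w) : Iso v u w := by
  rcases h with ⟨h1, h2⟩ | ⟨h1, h2⟩ | ⟨h1, h2⟩
  · exact Or.inl ⟨h1.symm, h1 ▸ h2⟩
  · exact Or.inr (Or.inr ⟨h1, h2⟩)
  · exact Or.inr (Or.inl ⟨h1, h2⟩)

lemma iso_swap23 {u v w : M} (h : Iso u v w) : Iso u w v := by
  rcases h with ⟨h1, h2⟩ | ⟨h1, h2⟩ | ⟨h1, h2⟩
  · exact Or.inr (Or.inl ⟨h1, h2⟩)
  · exact Or.inl ⟨h1, h2⟩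
  · exact Or.inr (Or.inr ⟨h1.symm, h1 ▸ h2⟩)

lemma iso_min {u v : M} (h : u ≠ v) : Iso u v (min u v) := by
  rcases h.lt_or_gt with h' | h'
  · exact Or.inr (Or.inl ⟨(min_eq_left h'.le).symm, h'⟩)
  · exact Or.inr (Or.inr ⟨(min_eq_right h'.le).symm, h'⟩)

lemma iso_lt_of_eq {u v w : M} (h : Iso u v w) (he : u = v) : u < w := by
  rcases h with ⟨h1, h2⟩ | ⟨h1, h2⟩ | ⟨h1, h2⟩
  · exact h2
  · exact absurd he (ne_of_lt h2)
  · exact absurd he.symm (ne_of_lt h2)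

lemma prop3on_iff (f : V → V → M) (S : Set V) :
    Prop3On f S ↔
      ∀ a ∈ S, ∀ b ∈ S, ∀ c ∈ S, a ≠ b → a ≠ c → b ≠ c →
        Iso (f a b) (f a c) (f b c) := by
  constructor
  · intro h a ha b hb c hc hab hac hbc
    obtain ⟨h1, h2⟩ := h a ha b hb c hc hab hac hbc
    by_cases he : f a b = f a c
    · exact Or.inl ⟨he, h2 he⟩
    · rcases (lt_or_gt_of_ne he) with h' | h'
      · exact Or.inr (Or.inl ⟨((h1 he).trans (min_eq_left h'.le)).symm, h'⟩)
      · exact Or.inr (Or.inr ⟨((h1 he).trans (min_eq_right h'.le)).symm, h'⟩)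
  · intro h a ha b hb c hc hab hac hbc
    have hi := h a ha b hb c hc hab hac hbc
    constructor
    · intro hne
      rcases hi with ⟨h1, h2⟩ | ⟨h1, h2⟩ | ⟨h1, h2⟩
      · exact absurd h1 hne
      · rw [min_eq_left h2.le]; exact h1.symm
      · rw [min_eq_right h2.le]; exact h1.symm
    · intro he
      exact iso_lt_of_eq hi he

open Classical in
noncomputable def pick [Nonempty M] (S T : Set M) : M :=
  if h : ∃ m, (∀ s ∈ S, s < m) ∧ (∀ t ∈ T, m < t) then h.choose else Classical.arbitrary M

lemma pick_spec [Nonempty M] {S T : Set M}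
    (h : ∃ m, (∀ s ∈ S, s < m) ∧ (∀ t ∈ T, m < t)) :
    (∀ s ∈ S, s < pick S T) ∧ (∀ t ∈ T, pick S T < t) := by
  unfold pick; rw [dif_pos h]; exact h.choose_spec

lemma exists_pick_h [Nonempty M] [DenselyOrdered M] [NoMaxOrder M] [NoMinOrder M]
    {S T : Set M} (hS : S.Finite) (hT : T.Finite)
    (hlt : ∀ s ∈ S, ∀ t ∈ T, s < t) :
    ∃ m, (∀ s ∈ S, s < m) ∧ (∀ t ∈ T, m < t) := by
  rcases S.eq_empty_or_nonempty with rfl | hSne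
  · rcases T.eq_empty_or_nonempty with rfl | hTne
    · exact ⟨Classical.arbitrary M, by simp, by simp⟩
    · obtain ⟨t₀, ht₀, hmin⟩ := T.exists_min_image id hT hTne
      obtain ⟨m, hm⟩ := exists_lt t₀
      exact ⟨m, by simp, fun t ht => hm.trans_le (hmin t ht)⟩
  · obtain ⟨s₀, hs₀, hmax⟩ := S.exists_max_image id hS hSne
    rcases T.eq_empty_or_nonempty with rfl | hTne
    · obtain ⟨m, hm⟩ := exists_gt s₀
      exact ⟨m, fun s hs => lt_of_le_of_lt (hmax s hs) hm, by simp⟩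
    · obtain ⟨t₀, ht₀, hmin⟩ := T.exists_min_image id hT hTne
      obtain ⟨m, hm1, hm2⟩ := exists_between (hlt s₀ hs₀ t₀ ht₀)
      exact ⟨m, fun s hs => lt_of_le_of_lt (hmax s hs) hm1,
        fun t ht => lt_of_lt_of_le hm2 (hmin t ht)⟩

section Main

variable {B C : Set V} {f : V → V → M}

/-- values of `b` against the common part `A = B ∩ C` -/
def Lset (B C : Set V) (f : V → V → M) (b : V) : Set M := (fun a => f a b) '' (B ∩ C)

/-- internal values of the clusters of `b` (in `B \ C`) and of `c` (in `C \ B`) -/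
def Uset (B C : Set V) (f : V → V → M) (b c : V) : Set M :=
  {v | ∃ p q, p ≠ q ∧ v = f p q ∧
      ((p ∈ B \ C ∧ q ∈ B \ C ∧ (∀ a ∈ B ∩ C, f a p = f a b) ∧ (∀ a ∈ B ∩ C, f a q = f a b)) ∨
       (p ∈ C \ B ∧ q ∈ C \ B ∧ (∀ a ∈ B ∩ C, f a p = f a c) ∧ (∀ a ∈ B ∩ C, f a q = f a c)))}

open Classical in
noncomputable def cross [Nonempty M] (B C : Set V) (f : V → V → M) (b c : V) : M :=
  if h : ∃ a, a ∈ B ∩ C ∧ f a b ≠ f a c then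
    min (f h.choose b) (f h.choose c)
  else pick (Lset B C f b) (Uset B C f b c)

-- distinctness helpers
lemma ne_ab {a b : V} (ha : a ∈ B ∩ C) (hb : b ∈ B \ C) : a ≠ b :=
  fun h => hb.2 (h ▸ ha.2)

lemma ne_ac {a c : V} (ha : a ∈ B ∩ C) (hc : c ∈ C \ B) : a ≠ c :=
  fun h => hc.2 (h ▸ ha.1)

lemma ne_bc {b c : V} (hb : b ∈ B \ C) (hc : c ∈ C \ B) : b ≠ c :=
  fun h => hb.2 (h ▸ hc.1)

/-- well-definedness of the case-1 value -/
lemma min_wd (h3B : Prop3On f B) (h3C : Prop3On f C)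
    {a a' b c : V} (ha : a ∈ B ∩ C) (ha' : a' ∈ B ∩ C) (hb : b ∈ B \ C) (hc : c ∈ C \ B)
    (hxy : f a b ≠ f a c) (hxy' : f a' b ≠ f a' c) :
    min (f a b) (f a c) = min (f a' b) (f a' c) := by
  rcases eq_or_ne a a' with rfl | hne
  · rfl
  have isoB := (prop3on_iff f B).mp h3B a ha.1 a' ha'.1 b hb.1 hne (ne_ab ha hb) (ne_ab ha' hb)
  have isoC := (prop3on_iff f C).mp h3C a ha.2 a' ha'.2 c hc.1 hne (ne_ac ha hc) (ne_ac ha' hc)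
  -- isoB : Iso (f a a') (f a b) (f a' b), isoC : Iso (f a a') (f a c) (f a' c)
  rcases isoB with ⟨hb1, hb2⟩ | ⟨hb1, hb2⟩ | ⟨hb1, hb2⟩ <;>
    rcases isoC with ⟨hc1, hc2⟩ | ⟨hc1, hc2⟩ | ⟨hc1, hc2⟩
  · exact absurd (hb1.symm.trans hc1) hxy
  · rw [min_eq_left (hb1 ▸ hc2).le, min_eq_right (hc1 ▸ hb2).le]
    exact hb1.symm.trans hc1
  · rw [min_eq_right (hc2.trans_eq hb1).le, min_eq_right ((hc1 ▸ hc2).trans hb2).le]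
    exact hc1
  · rw [min_eq_right (hc1 ▸ hb2).le, min_eq_left (hb1 ▸ hc2).le]
    exact hc1.symm.trans hb1
  · exact absurd (hb1.symm.trans hc1) hxy'
  · rw [min_eq_right (hc2.trans hb2).le, min_eq_right ((hc1 ▸ hc2).trans_eq hb1).le]
    exact hc1
  · rw [min_eq_left (hb2.trans_eq hc1).le, min_eq_left ((hb1 ▸ hb2).trans hc2).le]
    exact hb1
  · rw [min_eq_left (hb2.trans hc2).le, min_eq_left ((hb1 ▸ hb2).trans_eq hc1).le]
    exact hb1
  · rw [← hb1, ← hc1]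

/-- a non-distinguishing value is below any distinguishing pair -/
lemma nondist_lt (h3B : Prop3On f B) (h3C : Prop3On f C)
    {a a₁ b c : V} (ha : a ∈ B ∩ C) (ha₁ : a₁ ∈ B ∩ C) (hb : b ∈ B \ C) (hc : c ∈ C \ B)
    (heq : f a b = f a c) (hne : f a₁ b ≠ f a₁ c) :
    f a b < f a₁ b ∧ f a b < f a₁ c := by
  have hne' : a ≠ a₁ := by rintro rfl; exact hne heq
  have isoB := (prop3on_iff f B).mp h3B a ha.1 a₁ ha₁.1 b hb.1 hne' (ne_ab ha hb) (ne_ab ha₁ hb)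
  have isoC := (prop3on_iff f C).mp h3C a ha.2 a₁ ha₁.2 c hc.1 hne' (ne_ac ha hc) (ne_ac ha₁ hc)
  rw [← heq] at isoC
  -- isoB : Iso (f a a₁) (f a b) (f a₁ b), isoC : Iso (f a a₁) (f a b) (f a₁ c)
  rcases isoB with ⟨hb1, hb2⟩ | ⟨hb1, hb2⟩ | ⟨hb1, hb2⟩ <;>
    rcases isoC with ⟨hc1, hc2⟩ | ⟨hc1, hc2⟩ | ⟨hc1, hc2⟩
  · exact ⟨hb1 ▸ hb2, hc1 ▸ hc2⟩
  · exact absurd (hb1 ▸ hc2) (lt_irrefl _)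
  · exact absurd (hb1 ▸ hc2) (lt_irrefl _)
  · exact absurd (hc1 ▸ hb2) (lt_irrefl _)
  · exact absurd (hb1.symm.trans hc1) hne
  · exact absurd (hb2.trans hc2) (lt_irrefl _)
  · exact absurd (hc1 ▸ hb2) (lt_irrefl _)
  · exact absurd (hb2.trans hc2) (lt_irrefl _)
  · exact absurd (hb1.symm.trans hc1) hne

lemma cross_eq_of_dist [Nonempty M] (h3B : Prop3On f B) (h3C : Prop3On f C)
    {a b c : V} (ha : a ∈ B ∩ C) (hb : b ∈ B \ C) (hc : c ∈ C \ B)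
    (hne : f a b ≠ f a c) :
    cross B C f b c = min (f a b) (f a c) := by
  have hex : ∃ a', a' ∈ B ∩ C ∧ f a' b ≠ f a' c := ⟨a, ha, hne⟩
  unfold cross
  rw [dif_pos hex]
  obtain ⟨ha', hne'⟩ := hex.choose_spec
  exact min_wd h3B h3C ha' ha hb hc hne' hne

lemma cross_gt_of_nondist [Nonempty M] (h3B : Prop3On f B) (h3C : Prop3On f C)
    {a b c : V} (ha : a ∈ B ∩ C) (hb : b ∈ B \ C) (hc : c ∈ C \ B)
    (hd : ∃ a₁, a₁ ∈ B ∩ C ∧ f a₁ b ≠ f a₁ c) (heq : f a b = f a c) :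
    f a b < cross B C f b c := by
  obtain ⟨a₁, ha₁, hne₁⟩ := hd
  rw [cross_eq_of_dist h3B h3C ha₁ hb hc hne₁]
  obtain ⟨h1, h2⟩ := nondist_lt h3B h3C ha ha₁ hb hc heq hne₁
  exact lt_min h1 h2

lemma Lset_finite (hB : B.Finite) (b : V) : (Lset B C f b).Finite :=
  ((hB.inter_of_left C).image _)

lemma Uset_finite (hB : B.Finite) (hC : C.Finite) (b c : V) :
    (Uset B C f b c).Finite := by
  have hsub : Uset B C f b c ⊆ Set.image2 f ((B \ C) ∪ (C \ B)) ((B \ C) ∪ (C \ B)) := by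
    rintro v ⟨p, q, hpq, rfl, h | h⟩
    · exact ⟨p, Or.inl h.1, q, Or.inl h.2.1, rfl⟩
    · exact ⟨p, Or.inr h.1, q, Or.inr h.2.1, rfl⟩
  have hfin : ((B \ C) ∪ (C \ B)).Finite := hB.diff.union hC.diff
  exact (Set.Finite.image2 f hfin hfin).subset hsub

lemma LU_lt (h3B : Prop3On f B) (h3C : Prop3On f C)
    {b c : V} (hb : b ∈ B \ C) (hc : c ∈ C \ B)
    (hcase2 : ∀ a ∈ B ∩ C, f a b = f a c) :
    ∀ s ∈ Lset B C f b, ∀ t ∈ Uset B C f b c, s < t := by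
  rintro s ⟨a, ha, rfl⟩ t ⟨p, q, hpq, rfl, h | h⟩
  · obtain ⟨hp, hq, hfp, hfq⟩ := h
    have heq : f a p = f a q := (hfp a ha).trans (hfq a ha).symm
    have hiso := (prop3on_iff f B).mp h3B a ha.1 p hp.1 q hq.1
      (ne_ab ha hp) (ne_ab ha hq) hpq
    have := iso_lt_of_eq hiso heq
    calc f a b = f a p := (hfp a ha).symm
    _ < f p q := this
  · obtain ⟨hp, hq, hfp, hfq⟩ := h
    have heq : f a p = f a q := (hfp a ha).trans (hfq a ha).symm
    have hiso := (prop3on_iff f C).mp h3C a ha.2 p hp.1 q hq.1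
      (ne_ac ha hp) (ne_ac ha hq) hpq
    have := iso_lt_of_eq hiso heq
    calc f a b = f a c := hcase2 a ha
    _ = f a p := (hfp a ha).symm
    _ < f p q := this

lemma cross_case2_spec [Nonempty M] [DenselyOrdered M] [NoMaxOrder M] [NoMinOrder M]
    (hB : B.Finite) (hC : C.Finite) (h3B : Prop3On f B) (h3C : Prop3On f C)
    {b c : V} (hb : b ∈ B \ C) (hc : c ∈ C \ B)
    (hcase2 : ∀ a ∈ B ∩ C, f a b = f a c) :
    (∀ a ∈ B ∩ C, f a b < cross B C f b c) ∧
    (∀ t ∈ Uset B C f b c, cross B C f b c < t) := by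
  have hno : ¬ ∃ a, a ∈ B ∩ C ∧ f a b ≠ f a c := by
    push_neg
    exact fun a ha => hcase2 a ha
  have hex := exists_pick_h (Lset_finite hB b) (Uset_finite hB hC b c)
    (LU_lt h3B h3C hb hc hcase2)
  unfold cross
  rw [dif_neg hno]
  obtain ⟨h1, h2⟩ := pick_spec hex
  exact ⟨fun a ha => h1 _ ⟨a, ha, rfl⟩, h2⟩

/-- the case-2 value only depends on the profiles of `b` and `c` over `A` -/
lemma cross_case2_congr [Nonempty M]
    {b c b' c' : V}
    (hcase2 : ∀ a ∈ B ∩ C, f a b = f a c)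
    (hpb : ∀ a ∈ B ∩ C, f a b' = f a b) (hpc : ∀ a ∈ B ∩ C, f a c' = f a c) :
    cross B C f b' c' = cross B C f b c := by
  have hno : ¬ ∃ a, a ∈ B ∩ C ∧ f a b ≠ f a c := by
    push_neg; exact fun a ha => hcase2 a ha
  have hno' : ¬ ∃ a, a ∈ B ∩ C ∧ f a b' ≠ f a c' := by
    push_neg
    exact fun a ha => (hpb a ha).trans ((hcase2 a ha).trans (hpc a ha).symm)
  unfold cross
  rw [dif_neg hno, dif_neg hno']
  have hL : Lset B C f b' = Lset B C f b := by
    ext v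
    constructor
    · rintro ⟨a, ha, rfl⟩; exact ⟨a, ha, (hpb a ha).symm⟩
    · rintro ⟨a, ha, rfl⟩; exact ⟨a, ha, hpb a ha⟩
  have hU : Uset B C f b' c' = Uset B C f b c := by
    ext v
    constructor
    · rintro ⟨p, q, hpq, rfl, h | h⟩
      · exact ⟨p, q, hpq, rfl, Or.inl ⟨h.1, h.2.1,
          fun a ha => (h.2.2.1 a ha).trans (hpb a ha),
          fun a ha => (h.2.2.2 a ha).trans (hpb a ha)⟩⟩
      · exact ⟨p, q, hpq, rfl, Or.inr ⟨h.1, h.2.1,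
          fun a ha => (h.2.2.1 a ha).trans (hpc a ha),
          fun a ha => (h.2.2.2 a ha).trans (hpc a ha)⟩⟩
    · rintro ⟨p, q, hpq, rfl, h | h⟩
      · exact ⟨p, q, hpq, rfl, Or.inl ⟨h.1, h.2.1,
          fun a ha => (h.2.2.1 a ha).trans (hpb a ha).symm,
          fun a ha => (h.2.2.2 a ha).trans (hpb a ha).symm⟩⟩
      · exact ⟨p, q, hpq, rfl, Or.inr ⟨h.1, h.2.1,
          fun a ha => (h.2.2.1 a ha).trans (hpc a ha).symm,
          fun a ha => (h.2.2.2 a ha).trans (hpc a ha).symm⟩⟩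
  rw [hL, hU]

lemma mem_Uset_left {b c p q : V} (hp : p ∈ B \ C) (hq : q ∈ B \ C) (hpq : p ≠ q)
    (hfp : ∀ a ∈ B ∩ C, f a p = f a b) (hfq : ∀ a ∈ B ∩ C, f a q = f a b) :
    f p q ∈ Uset B C f b c :=
  ⟨p, q, hpq, rfl, Or.inl ⟨hp, hq, hfp, hfq⟩⟩

lemma mem_Uset_right {b c p q : V} (hp : p ∈ C \ B) (hq : q ∈ C \ B) (hpq : p ≠ q)
    (hfp : ∀ a ∈ B ∩ C, f a p = f a c) (hfq : ∀ a ∈ B ∩ C, f a q = f a c) :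
    f p q ∈ Uset B C f b c :=
  ⟨p, q, hpq, rfl, Or.inr ⟨hp, hq, hfp, hfq⟩⟩

variable [Nonempty M] [DenselyOrdered M] [NoMaxOrder M] [NoMinOrder M]

/-- Triple `a ∈ A`, `b ∈ B \ C`, `c ∈ C \ B`. -/
lemma isoH1 (hB : B.Finite) (hC : C.Finite) (h3B : Prop3On f B) (h3C : Prop3On f C)
    {a b c : V} (ha : a ∈ B ∩ C) (hb : b ∈ B \ C) (hc : c ∈ C \ B) :
    Iso (f a b) (f a c) (cross B C f b c) := by
  by_cases hd : ∃ a', a' ∈ B ∩ C ∧ f a' b ≠ f a' c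
  · by_cases hab : f a b = f a c
    · exact Or.inl ⟨hab, cross_gt_of_nondist h3B h3C ha hb hc hd hab⟩
    · rw [cross_eq_of_dist h3B h3C ha hb hc hab]
      exact iso_min hab
  · push_neg at hd
    exact Or.inl ⟨hd a ha, (cross_case2_spec hB hC h3B h3C hb hc hd).1 a ha⟩

/-- Triple `b, b' ∈ B \ C`, `c ∈ C \ B`. -/
lemma isoH2 (hB : B.Finite) (hC : C.Finite) (h3B : Prop3On f B) (h3C : Prop3On f C)
    {b b' c : V} (hb : b ∈ B \ C) (hb' : b' ∈ B \ C) (hbb' : b ≠ b') (hc : c ∈ C \ B) :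
    Iso (f b b') (cross B C f b c) (cross B C f b' c) := by
  by_cases hd : ∃ a, a ∈ B ∩ C ∧ f a b ≠ f a c
  · obtain ⟨a₁, ha₁, hne₁⟩ := hd
    have hg1 : cross B C f b c = min (f a₁ b) (f a₁ c) :=
      cross_eq_of_dist h3B h3C ha₁ hb hc hne₁
    have isoB := (prop3on_iff f B).mp h3B a₁ ha₁.1 b hb.1 b' hb'.1
      (ne_ab ha₁ hb) (ne_ab ha₁ hb') hbb'
    -- isoB : Iso (f a₁ b) (f a₁ b') (f b b')
    by_cases hx' : f a₁ b' = f a₁ c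
    · -- a₁ does not distinguish (b', c)
      have hg2 : f a₁ b' < cross B C f b' c := by
        by_cases hd' : ∃ a, a ∈ B ∩ C ∧ f a b' ≠ f a c
        · exact cross_gt_of_nondist h3B h3C ha₁ hb' hc hd' hx'
        · push_neg at hd'
          exact (cross_case2_spec hB hC h3B h3C hb' hc hd').1 a₁ ha₁
      have hxy : f a₁ b ≠ f a₁ b' := fun h => hne₁ (h.trans hx')
      rw [hg1, ← hx']
      -- goal : Iso (f b b') (min (f a₁ b) (f a₁ b')) (cross B C f b' c)
      rcases isoB with ⟨h1, h2⟩ | ⟨h1, h2⟩ | ⟨h1, h2⟩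
      · exact absurd h1 hxy
      · rw [min_eq_left h2.le, ← h1]
        exact Or.inl ⟨rfl, h2.trans hg2⟩
      · rw [min_eq_right h2.le, ← h1]
        exact Or.inl ⟨rfl, hg2⟩
    · have hg2 : cross B C f b' c = min (f a₁ b') (f a₁ c) :=
        cross_eq_of_dist h3B h3C ha₁ hb' hc hx'
      rw [hg1, hg2]
      rcases isoB with ⟨h1, h2⟩ | ⟨h1, h2⟩ | ⟨h1, h2⟩
      · rw [← h1]
        exact Or.inr (Or.inr ⟨rfl, (min_le_left _ _).trans_lt h2⟩)
      · rw [← h1]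
        rcases lt_or_gt_of_ne hne₁ with hlt | hlt
        · -- f a₁ b < f a₁ c
          rw [min_eq_left hlt.le]
          exact Or.inl ⟨rfl, lt_min h2 hlt⟩
        · -- f a₁ c < f a₁ b
          rw [min_eq_right hlt.le, min_eq_right (hlt.trans h2).le]
          exact Or.inr (Or.inr ⟨rfl, hlt⟩)
      · rw [← h1]
        rcases lt_or_gt_of_ne hx' with hlt | hlt
        · -- f a₁ b' < f a₁ c
          rw [min_eq_left hlt.le]
          exact Or.inr (Or.inl ⟨rfl, lt_min h2 hlt⟩)
        · -- f a₁ c < f a₁ b'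
          rw [min_eq_right hlt.le, min_eq_right (hlt.trans h2).le]
          exact Or.inr (Or.inr ⟨rfl, hlt⟩)
  · push_neg at hd
    by_cases hd' : ∃ a, a ∈ B ∩ C ∧ f a b' ≠ f a c
    · obtain ⟨a₂, ha₂, hne₂⟩ := hd'
      have hg2 : cross B C f b' c = min (f a₂ b') (f a₂ c) :=
        cross_eq_of_dist h3B h3C ha₂ hb' hc hne₂
      have hg1 : f a₂ b < cross B C f b c :=
        (cross_case2_spec hB hC h3B h3C hb hc hd).1 a₂ ha₂
      have hb2c : f a₂ b = f a₂ c := hd a₂ ha₂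
      have hne : f a₂ b ≠ f a₂ b' := fun h => hne₂ (h.symm.trans hb2c)
      have isoB := (prop3on_iff f B).mp h3B a₂ ha₂.1 b hb.1 b' hb'.1
        (ne_ab ha₂ hb) (ne_ab ha₂ hb') hbb'
      rcases isoB with ⟨h1, h2⟩ | ⟨h1, h2⟩ | ⟨h1, h2⟩
      · exact absurd h1 hne
      · -- f a₂ b = f b b', f a₂ b < f a₂ b'
        have heq : f b b' = cross B C f b' c := by
          rw [hg2, min_eq_right (hb2c ▸ h2 : f a₂ c < f a₂ b').le, ← hb2c, h1]
        exact Or.inr (Or.inl ⟨heq, h1 ▸ hg1⟩)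
      · -- f a₂ b' = f b b', f a₂ b' < f a₂ b
        have heq : f b b' = cross B C f b' c := by
          rw [hg2, min_eq_left (h2.trans_eq hb2c).le, h1]
        exact Or.inr (Or.inl ⟨heq, h1 ▸ (h2.trans hg1)⟩)
    · push_neg at hd'
      have hprof : ∀ a ∈ B ∩ C, f a b' = f a b :=
        fun a ha => (hd' a ha).trans (hd a ha).symm
      have hcongr : cross B C f b' c = cross B C f b c :=
        cross_case2_congr hd hprof (fun a _ => rfl)
      have hmem : f b b' ∈ Uset B C f b c :=
        mem_Uset_left hb hb' hbb' (fun a _ => rfl) hprof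
      have hlt : cross B C f b c < f b b' :=
        (cross_case2_spec hB hC h3B h3C hb hc hd).2 _ hmem
      rw [hcongr]
      exact Or.inr (Or.inr ⟨rfl, hlt⟩)

/-- Triple `c, c' ∈ C \ B`, `b ∈ B \ C`. -/
lemma isoH2' (hB : B.Finite) (hC : C.Finite) (h3B : Prop3On f B) (h3C : Prop3On f C)
    {b c c' : V} (hc : c ∈ C \ B) (hc' : c' ∈ C \ B) (hcc' : c ≠ c') (hb : b ∈ B \ C) :
    Iso (f c c') (cross B C f b c) (cross B C f b c') := by
  by_cases hd : ∃ a, a ∈ B ∩ C ∧ f a b ≠ f a c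
  · obtain ⟨a₁, ha₁, hne₁⟩ := hd
    have hg1 : cross B C f b c = min (f a₁ b) (f a₁ c) :=
      cross_eq_of_dist h3B h3C ha₁ hb hc hne₁
    have isoC := (prop3on_iff f C).mp h3C a₁ ha₁.2 c hc.1 c' hc'.1
      (ne_ac ha₁ hc) (ne_ac ha₁ hc') hcc'
    -- isoC : Iso (f a₁ c) (f a₁ c') (f c c')
    by_cases hr : f a₁ b = f a₁ c'
    · -- a₁ does not distinguish (b, c')
      have hg2 : f a₁ b < cross B C f b c' := by
        by_cases hd' : ∃ a, a ∈ B ∩ C ∧ f a b ≠ f a c'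
        · exact cross_gt_of_nondist h3B h3C ha₁ hb hc' hd' hr
        · push_neg at hd'
          exact (cross_case2_spec hB hC h3B h3C hb hc' hd').1 a₁ ha₁
      have hqr : f a₁ c ≠ f a₁ c' := fun h => hne₁ (hr.trans h.symm)
      rw [hg1, min_comm]
      rw [← hr] at isoC
      -- isoC : Iso (f a₁ c) (f a₁ b) (f c c')
      rcases isoC with ⟨h1, h2⟩ | ⟨h1, h2⟩ | ⟨h1, h2⟩
      · exact absurd h1.symm hne₁
      · rw [min_eq_left h2.le, ← h1]
        exact Or.inl ⟨rfl, h2.trans hg2⟩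
      · rw [min_eq_right h2.le, ← h1]
        exact Or.inl ⟨rfl, hg2⟩
    · have hg2 : cross B C f b c' = min (f a₁ b) (f a₁ c') :=
        cross_eq_of_dist h3B h3C ha₁ hb hc' hr
      rw [hg1, hg2]
      rcases isoC with ⟨h1, h2⟩ | ⟨h1, h2⟩ | ⟨h1, h2⟩
      · rw [← h1]
        exact Or.inr (Or.inr ⟨rfl, (min_le_right _ _).trans_lt h2⟩)
      · rw [← h1]
        rcases lt_or_gt_of_ne hne₁ with hlt | hlt
        · -- f a₁ b < f a₁ c
          rw [min_eq_left hlt.le, min_eq_left (hlt.trans h2).le]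
          exact Or.inr (Or.inr ⟨rfl, hlt⟩)
        · -- f a₁ c < f a₁ b
          rw [min_eq_right hlt.le]
          exact Or.inl ⟨rfl, lt_min hlt h2⟩
      · rw [← h1]
        rcases lt_or_gt_of_ne hr with hlt | hlt
        · -- f a₁ b < f a₁ c'
          rw [min_eq_left (hlt.trans h2).le, min_eq_left hlt.le]
          exact Or.inr (Or.inr ⟨rfl, hlt⟩)
        · -- f a₁ c' < f a₁ b
          rw [min_eq_right hlt.le]
          exact Or.inr (Or.inl ⟨rfl, lt_min hlt h2⟩)
  · push_neg at hd
    by_cases hd' : ∃ a, a ∈ B ∩ C ∧ f a b ≠ f a c'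
    · obtain ⟨a₂, ha₂, hne₂⟩ := hd'
      have hg2 : cross B C f b c' = min (f a₂ b) (f a₂ c') :=
        cross_eq_of_dist h3B h3C ha₂ hb hc' hne₂
      have hg1 : f a₂ b < cross B C f b c :=
        (cross_case2_spec hB hC h3B h3C hb hc hd).1 a₂ ha₂
      have isoC := (prop3on_iff f C).mp h3C a₂ ha₂.2 c hc.1 c' hc'.1
        (ne_ac ha₂ hc) (ne_ac ha₂ hc') hcc'
      rw [← hd a₂ ha₂] at isoC
      -- isoC : Iso (f a₂ b) (f a₂ c') (f c c')
      rcases isoC with ⟨h1, h2⟩ | ⟨h1, h2⟩ | ⟨h1, h2⟩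
      · exact absurd h1 hne₂
      · have heq : f c c' = cross B C f b c' := by
          rw [hg2, min_eq_left h2.le, h1]
        exact Or.inr (Or.inl ⟨heq, h1 ▸ hg1⟩)
      · have heq : f c c' = cross B C f b c' := by
          rw [hg2, min_eq_right h2.le, h1]
        exact Or.inr (Or.inl ⟨heq, h1 ▸ (h2.trans hg1)⟩)
    · push_neg at hd'
      have hprof : ∀ a ∈ B ∩ C, f a c' = f a c :=
        fun a ha => (hd' a ha).symm.trans (hd a ha)
      have hcongr : cross B C f b c' = cross B C f b c :=
        cross_case2_congr hd (fun a _ => rfl) hprof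
      have hmem : f c c' ∈ Uset B C f b c :=
        mem_Uset_right hc hc' hcc' (fun a _ => rfl) hprof
      have hlt : cross B C f b c < f c c' :=
        (cross_case2_spec hB hC h3B h3C hb hc hd).2 _ hmem
      rw [hcongr]
      exact Or.inr (Or.inr ⟨rfl, hlt⟩)

open Classical in
noncomputable def gfun [Nonempty M] (B C : Set V) (f : V → V → M) : V → V → M := fun u v =>
  if u ∈ B ∧ v ∈ B then f u v
  else if u ∈ C ∧ v ∈ C then f u v
  else if u ∈ B ∧ v ∈ C then cross B C f u v
  else if u ∈ C ∧ v ∈ B then cross B C f v u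
  else f u v

lemma g_symm [Nonempty M] (hsymm : ∀ a b : V, f a b = f b a) (u v : V) :
    gfun B C f u v = gfun B C f v u := by
  unfold gfun
  split_ifs <;> first | rfl | exact hsymm u v | tauto

lemma g_BB [Nonempty M] {u v : V} (hu : u ∈ B) (hv : v ∈ B) :
    gfun B C f u v = f u v := by
  unfold gfun; rw [if_pos ⟨hu, hv⟩]

lemma g_CC [Nonempty M] {u v : V} (hu : u ∈ C) (hv : v ∈ C) :
    gfun B C f u v = f u v := by
  unfold gfun; split_ifs <;> first | rfl | tauto

lemma g_cross [Nonempty M] {b c : V} (hb : b ∈ B \ C) (hc : c ∈ C \ B) :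
    gfun B C f b c = cross B C f b c := by
  obtain ⟨hb1, hb2⟩ := hb; obtain ⟨hc1, hc2⟩ := hc
  unfold gfun; split_ifs <;> first | rfl | tauto

lemma g_cross' [Nonempty M] {b c : V} (hc : c ∈ C \ B) (hb : b ∈ B \ C) :
    gfun B C f c b = cross B C f b c := by
  obtain ⟨hb1, hb2⟩ := hb; obtain ⟨hc1, hc2⟩ := hc
  unfold gfun; split_ifs <;> first | rfl | tauto

end Main

end Stmt8

open Stmt8 in
/-- Joint embedding (amalgamation over `A = B ∩ C`) for the class `K`: if a coloring
over a countable dense linear order `M` without endpoints satisfies property (3) on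
each of the finite vertex sets `B` and `C`, then it can be modified off `B` and `C`
so that property (3) holds on all of `B ∪ C`. -/
theorem stmt8 {V M : Type*} [LinearOrder M] [Countable M] [Nonempty M]
    [DenselyOrdered M] [NoMaxOrder M] [NoMinOrder M]
    (B C : Set V) (hB : B.Finite) (hC : C.Finite)
    (f : V → V → M) (hsymm : ∀ a b : V, f a b = f b a)
    (h3B : Prop3On f B) (h3C : Prop3On f C) :
    ∃ g : V → V → M,
      (∀ a b : V, g a b = g b a) ∧
      (∀ a ∈ B, ∀ b ∈ B, g a b = f a b) ∧
      (∀ a ∈ C, ∀ b ∈ C, g a b = f a b) ∧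
      Prop3On g (B ∪ C) := by
  refine ⟨gfun B C f, g_symm hsymm, fun a ha b hb => g_BB ha hb,
    fun a ha b hb => g_CC ha hb, ?_⟩
  rw [prop3on_iff]
  set g := gfun B C f with hg
  have hgs : ∀ u v : V, g u v = g v u := g_symm hsymm
  have allB : ∀ x ∈ B, ∀ y ∈ B, ∀ z ∈ B, x ≠ y → x ≠ z → y ≠ z →
      Iso (g x y) (g x z) (g y z) := by
    intro x hx y hy z hz h1 h2 h3
    rw [hg, g_BB hx hy, g_BB hx hz, g_BB hy hz]
    exact (prop3on_iff f B).mp h3B x hx y hy z hz h1 h2 h3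
  have allC : ∀ x ∈ C, ∀ y ∈ C, ∀ z ∈ C, x ≠ y → x ≠ z → y ≠ z →
      Iso (g x y) (g x z) (g y z) := by
    intro x hx y hy z hz h1 h2 h3
    rw [hg, g_CC hx hy, g_CC hx hz, g_CC hy hz]
    exact (prop3on_iff f C).mp h3C x hx y hy z hz h1 h2 h3
  have twoB : ∀ x ∈ B, ∀ y ∈ B, ∀ z ∈ C \ B, x ≠ y →
      Iso (g x y) (g x z) (g y z) := by
    intro x hx y hy z hz hxy
    have hxz : x ≠ z := fun h => hz.2 (h ▸ hx)
    have hyz : y ≠ z := fun h => hz.2 (h ▸ hy)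
    by_cases hxC : x ∈ C
    · by_cases hyC : y ∈ C
      · exact allC x hxC y hyC z hz.1 hxy hxz hyz
      · -- x ∈ A, y ∈ B \ C
        have h := isoH1 hB hC h3B h3C (⟨hx, hxC⟩ : x ∈ B ∩ C) (⟨hy, hyC⟩ : y ∈ B \ C) hz
        rw [hg, g_BB hx hy, g_CC hxC hz.1, g_cross ⟨hy, hyC⟩ hz]
        exact h
    · by_cases hyC : y ∈ C
      · -- y ∈ A, x ∈ B \ C
        have h := isoH1 hB hC h3B h3C (⟨hy, hyC⟩ : y ∈ B ∩ C) (⟨hx, hxC⟩ : x ∈ B \ C) hz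
        have h' := iso_swap23 h
        -- h' : Iso (f y x) (cross B C f x z) (f y z)
        rw [hsymm y x] at h'
        rw [hg, g_BB hx hy, g_cross ⟨hx, hxC⟩ hz, g_CC hyC hz.1]
        exact h'
      · -- x, y ∈ B \ C
        have h := isoH2 hB hC h3B h3C (⟨hx, hxC⟩ : x ∈ B \ C) (⟨hy, hyC⟩ : y ∈ B \ C) hxy hz
        rw [hg, g_BB hx hy, g_cross ⟨hx, hxC⟩ hz, g_cross ⟨hy, hyC⟩ hz]
        exact h
  have twoC : ∀ x ∈ C \ B, ∀ y ∈ C \ B, ∀ z ∈ B, x ≠ y →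
      Iso (g x y) (g x z) (g y z) := by
    intro x hx y hy z hz hxy
    have hxz : x ≠ z := fun h => hx.2 (h ▸ hz)
    have hyz : y ≠ z := fun h => hy.2 (h ▸ hz)
    by_cases hzC : z ∈ C
    · exact allC x hx.1 y hy.1 z hzC hxy hxz hyz
    · have h := isoH2' hB hC h3B h3C hx hy hxy (⟨hz, hzC⟩ : z ∈ B \ C)
      -- h : Iso (f x y) (cross B C f z x) (cross B C f z y)
      rw [hg, g_CC hx.1 hy.1, g_cross' hx ⟨hz, hzC⟩, g_cross' hy ⟨hz, hzC⟩]
      exact h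
  intro x hx y hy z hz hxy hxz hyz
  by_cases hxB : x ∈ B <;> by_cases hyB : y ∈ B <;> by_cases hzB : z ∈ B
  · exact allB x hxB y hyB z hzB hxy hxz hyz
  · -- x, y ∈ B, z ∈ C \ B
    have hzC : z ∈ C := hz.resolve_left hzB
    exact twoB x hxB y hyB z ⟨hzC, hzB⟩ hxy
  · -- x, z ∈ B, y ∈ C \ B
    have hyC : y ∈ C := hy.resolve_left hyB
    have h := iso_swap12 (twoB x hxB z hzB y ⟨hyC, hyB⟩ hxz)
    rw [hgs z y] at h
    exact h
  · -- x ∈ B, y, z ∈ C \ B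
    have hyC : y ∈ C := hy.resolve_left hyB
    have hzC : z ∈ C := hz.resolve_left hzB
    have h := twoC y ⟨hyC, hyB⟩ z ⟨hzC, hzB⟩ x hxB hyz
    -- h : Iso (g y z) (g y x) (g z x)
    rw [hgs y x, hgs z x] at h
    exact iso_swap23 (iso_swap12 h)
  · -- y, z ∈ B, x ∈ C \ B
    have hxC : x ∈ C := hx.resolve_left hxB
    have h := twoB y hyB z hzB x ⟨hxC, hxB⟩ hyz
    -- h : Iso (g y z) (g y x) (g z x)
    rw [hgs y x, hgs z x] at h
    exact iso_swap23 (iso_swap12 h)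
  · -- y ∈ B, x, z ∈ C \ B
    have hxC : x ∈ C := hx.resolve_left hxB
    have hzC : z ∈ C := hz.resolve_left hzB
    have h := iso_swap12 (twoC x ⟨hxC, hxB⟩ z ⟨hzC, hzB⟩ y hyB hxz)
    rw [hgs z y] at h
    exact h
  · -- z ∈ B, x, y ∈ C \ B
    have hxC : x ∈ C := hx.resolve_left hxB
    have hyC : y ∈ C := hy.resolve_left hyB
    exact twoC x ⟨hxC, hxB⟩ y ⟨hyC, hyB⟩ z hzB hxy
  · -- all in C
    exact allC x (hx.resolve_left hxB) y (hy.resolve_left hyB) z (hz.resolve_left hzB)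
      hxy hxz hyz
end

section
/- Let V be a set with coloring f : [V]² → M satisfying property (3), and let A ⊆ V be finite. Suppose b is a new vertex with colors f{b,a} ∈ M defined for a ∈ A such that A ∪ {b} satisfies property (3). Define V₀ = A and V_{n+1} = {v ∈ V : ∃a ∈ V_n, f{a,b} ≠ f{a,v}}, and for v ∈ V_{n+1} set f{b,v} = min(f{a,v}, f{a,b}) for any witnessing a. Then this assignment is well-defined (independent of the witness a) and property (3) holds on V_ω ∪ {b} where V_ω = ⋃_n V_n. -/
section MTlemmas
variable {M : Type*} [LinearOrder M]

variable {M : Type*} [LinearOrder M]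

/-- "Among x, y, z, the minimum is attained exactly twice." -/
def MT (x y z : M) : Prop := (x = y ∧ x < z) ∨ (x = z ∧ x < y) ∨ (y = z ∧ y < x)

lemma MT.swap1 {x y z : M} (h : MT x y z) : MT y x z := by
  rcases h with ⟨rfl, h⟩ | ⟨rfl, h⟩ | ⟨rfl, h⟩
  · exact Or.inl ⟨rfl, h⟩
  · exact Or.inr (Or.inr ⟨rfl, h⟩)
  · exact Or.inr (Or.inl ⟨rfl, h⟩)

lemma MT.swap2 {x y z : M} (h : MT x y z) : MT x z y := by
  rcases h with ⟨rfl, h⟩ | ⟨rfl, h⟩ | ⟨rfl, h⟩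
  · exact Or.inr (Or.inl ⟨rfl, h⟩)
  · exact Or.inl ⟨rfl, h⟩
  · exact Or.inr (Or.inr ⟨rfl, h⟩)

lemma tri_iff_MT {x y z : M} :
    ((x ≠ y → z = min x y) ∧ (x = y → x < z)) ↔ MT x y z := by
  constructor
  · rintro ⟨h1, h2⟩
    rcases lt_trichotomy x y with h | h | h
    · have hz : z = x := (h1 h.ne).trans (min_eq_left h.le)
      exact Or.inr (Or.inl ⟨hz.symm, h⟩)
    · exact Or.inl ⟨h, h2 h⟩
    · have hz : z = y := (h1 h.ne').trans (min_eq_right h.le)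
      exact Or.inr (Or.inr ⟨hz.symm, h⟩)
  · rintro (⟨rfl, h⟩ | ⟨rfl, h⟩ | ⟨rfl, h⟩)
    · exact ⟨fun hc => absurd rfl hc, fun _ => h⟩
    · exact ⟨fun _ => (min_eq_left h.le).symm, fun hc => absurd hc h.ne⟩
    · exact ⟨fun _ => (min_eq_right h.le).symm, fun hc => absurd hc.symm h.ne⟩

lemma MT.force {x z y : M} (h : MT x z y) (hxy : x ≠ y) : z = min y x := by
  rcases h with ⟨rfl, h⟩ | ⟨rfl, h⟩ | ⟨rfl, h⟩
  · exact (min_eq_right h.le).symm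
  · exact absurd rfl hxy
  · exact (min_eq_left h.le).symm

lemma MT.self {x y : M} (hxy : x ≠ y) : MT x (min y x) y := by
  rcases hxy.lt_or_gt with h | h
  · rw [min_eq_right h.le]; exact Or.inl ⟨rfl, h⟩
  · rw [min_eq_left h.le]; exact Or.inr (Or.inr ⟨rfl, h⟩)

lemma MT.L2 {x x' e y y' : M} (h1 : MT x x' e) (h2 : MT y y' e) (hxy : x ≠ y) :
    MT x' (min y x) y' := by
  rcases h1 with ⟨h1e, h1⟩ | ⟨h1e, h1⟩ | ⟨h1e, h1⟩ <;>
    rcases h2 with ⟨h2e, h2⟩ | ⟨h2e, h2⟩ | ⟨h2e, h2⟩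
  · rw [← h1e, ← h2e]; exact MT.self hxy
  · -- x = x' < e; y = e < y' : min y x = x
    have hxly : x < y := h1.trans_eq h2e.symm
    rw [min_eq_right hxly.le]
    exact Or.inl ⟨h1e.symm, h1e.symm.trans_lt (hxly.trans h2)⟩
  · -- x = x' < e; y' = e < y : min y x = x
    have hxly : x < y := (h1.trans_eq h2e.symm).trans h2
    rw [min_eq_right hxly.le]
    exact Or.inl ⟨h1e.symm, h1e.symm.trans_lt (h1.trans_eq h2e.symm)⟩
  · -- x = e < x'; y = y' < e : min y x = y
    have hylx : y < x := h2.trans_eq h1e.symm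
    rw [min_eq_left hylx.le]
    exact Or.inr (Or.inr ⟨h2e, hylx.trans h1⟩)
  · exact absurd (h1e.trans h2e.symm) hxy
  · -- x = e < x'; y' = e < y : min y x = x = y'
    have hxy' : x = y' := h1e.trans h2e.symm
    have hxly : x < y := hxy'.trans_lt h2
    rw [min_eq_right hxly.le]
    exact Or.inr (Or.inr ⟨hxy', h1⟩)
  · -- x' = e < x; y = y' < e : min y x = y
    have hylx : y < x := (h2.trans_eq h1e.symm).trans h1
    rw [min_eq_left hylx.le]
    exact Or.inr (Or.inr ⟨h2e, h2.trans_eq h1e.symm⟩)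
  · -- x' = e < x; y = e < y' : min y x = y = x'
    have hyx' : y = x' := h2e.trans h1e.symm
    have hylx : y < x := hyx'.trans_lt h1
    rw [min_eq_left hylx.le]
    exact Or.inl ⟨hyx'.symm, hyx'.symm.trans_lt h2⟩
  · -- x' = e < x; y' = e < y : min y x > e
    exact Or.inr (Or.inl ⟨h1e.trans h2e.symm,
      h1e.trans_lt (lt_min (h2e.symm.trans_lt h2) (h1e.symm.trans_lt h1))⟩)

lemma MT.L3 {y y' e x : M} (h : MT y y' e) (hxy : x ≠ y) (hxy' : x ≠ y') :
    MT (min y x) (min y' x) e := by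
  rcases h with ⟨he, h⟩ | ⟨he, h⟩ | ⟨he, h⟩
  · rw [← he]; exact Or.inl ⟨rfl, (min_le_left _ _).trans_lt h⟩
  · -- y = e < y'
    rcases hxy.lt_or_gt with hx | hx
    · rw [min_eq_right hx.le, min_eq_right (hx.trans ((he ▸ h : y < y'))).le]
      exact Or.inl ⟨rfl, hx.trans_eq he⟩
    · rw [min_eq_left hx.le]
      exact Or.inr (Or.inl ⟨he, lt_min h hx⟩)
  · -- y' = e < y
    rcases hxy'.lt_or_gt with hx | hx
    · rw [min_eq_right hx.le, min_eq_right (hx.trans h).le]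
      exact Or.inl ⟨rfl, hx.trans_eq he⟩
    · rw [min_eq_left hx.le]
      exact Or.inr (Or.inr ⟨he, lt_min h hx⟩)

lemma MT.L4 {α α' e p q' : M} (t1 : MT α α' e) (t2 : MT p α' e) (t3 : MT α q' e)
    (hp : p ≠ α) (hq : q' ≠ α') : False := by
  rcases t1 with ⟨h1e, h1⟩ | ⟨h1e, h1⟩ | ⟨h1e, h1⟩
  · -- α = α', α < e
    rcases t2 with ⟨h2e, h2⟩ | ⟨h2e, h2⟩ | ⟨h2e, h2⟩
    · exact hp (h2e.trans h1e.symm)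
    · exact absurd ((h1.trans_eq h2e.symm).trans (h2.trans_eq h1e.symm)) (lt_irrefl α)
    · exact absurd (h1e.trans h2e) h1.ne
  · -- α = e, α < α'
    rcases t2 with ⟨h2e, h2⟩ | ⟨h2e, h2⟩ | ⟨h2e, h2⟩
    · exact absurd ((h1.trans_eq h2e.symm).trans (h2.trans_eq h1e.symm)) (lt_irrefl α)
    · exact hp (h2e.trans h1e.symm)
    · exact absurd (h1.trans_eq (h2e.trans h1e.symm)) (lt_irrefl α)
  · -- α' = e, α' < α
    rcases t3 with ⟨h3e, h3⟩ | ⟨h3e, h3⟩ | ⟨h3e, h3⟩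
    · exact absurd ((h1.trans h3).trans_eq h1e.symm) (lt_irrefl α')
    · exact absurd ((h1e.trans h3e.symm).symm.trans_lt h1) (lt_irrefl α)
    · exact hq (h3e.trans h1e.symm)

end MTlemmas


open Classical in
/-- One step of the extension: add all vertices whose color is forced, and record it. -/
noncomputable def extStep {V M : Type*} [LinearOrder M] (f : V → V → M)
    (p : Set V × (V → M)) : Set V × (V → M) :=
  ⟨p.1 ∪ {v | ∃ a, a ∈ p.1 ∧ a ≠ v ∧ p.2 a ≠ f a v},
   fun v => if v ∈ p.1 then p.2 v
     else if hw : ∃ a, a ∈ p.1 ∧ a ≠ v ∧ p.2 a ≠ f a v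
       then min (f hw.choose v) (p.2 hw.choose) else p.2 v⟩

noncomputable def extIter {V M : Type*} [LinearOrder M] (f : V → V → M)
    (A : Set V) (g : V → M) : ℕ → Set V × (V → M)
  | 0 => (A, g)
  | n + 1 => extStep f (extIter f A g n)

open Classical in
noncomputable def extH {V M : Type*} [LinearOrder M] (f : V → V → M)
    (A : Set V) (g : V → M) : V → M := fun v =>
  if hv : ∃ n, v ∈ (extIter f A g n).1 then (extIter f A g (Nat.find hv)).2 v else g v

noncomputable def extV {V M : Type*} [LinearOrder M] (f : V → V → M)
    (A : Set V) (g : V → M) : ℕ → Set V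
  | 0 => A
  | n + 1 => {v | ∃ a ∈ extV f A g n, a ≠ v ∧ extH f A g a ≠ f a v}

section lemmas
variable {V M : Type*} [LinearOrder M] (f : V → V → M) (A : Set V) (g : V → M)

lemma extIter_zero : extIter f A g 0 = (A, g) := rfl

lemma extIter_succ_mem {n : ℕ} {v : V}
    (hv : ∃ a, a ∈ (extIter f A g n).1 ∧ a ≠ v ∧ (extIter f A g n).2 a ≠ f a v) :
    v ∈ (extIter f A g (n + 1)).1 := by
  rw [extIter]; exact Or.inr hv

lemma extIter_mono' {n m : ℕ} (hnm : n ≤ m) :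
    (extIter f A g n).1 ⊆ (extIter f A g m).1 := by
  induction m, hnm using Nat.le_induction with
  | base => exact le_rfl
  | succ m hm ih => exact ih.trans (by rw [extIter]; exact Set.subset_union_left)

lemma extIter_stable {n : ℕ} {v : V} (hv : v ∈ (extIter f A g n).1) :
    (extIter f A g (n + 1)).2 v = (extIter f A g n).2 v := by
  rw [extIter]; exact if_pos hv

lemma extIter_stable' {n m : ℕ} (hnm : n ≤ m) {v : V} (hv : v ∈ (extIter f A g n).1) :
    (extIter f A g m).2 v = (extIter f A g n).2 v := by
  induction m, hnm using Nat.le_induction with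
  | base => rfl
  | succ m hm ih =>
      rw [extIter_stable f A g (extIter_mono' f A g hm hv), ih]

lemma extH_eq {n : ℕ} {v : V} (hv : v ∈ (extIter f A g n).1) :
    extH f A g v = (extIter f A g n).2 v := by
  classical
  have hex : ∃ k, v ∈ (extIter f A g k).1 := ⟨n, hv⟩
  rw [extH, dif_pos hex]
  have h1 : Nat.find hex ≤ n := Nat.find_min' hex hv
  rw [extIter_stable' f A g h1 (Nat.find_spec hex)]

lemma extH_new {n : ℕ} {v : V} (hv : v ∈ (extIter f A g (n + 1)).1)
    (hv' : v ∉ (extIter f A g n).1) :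
    ∃ a, a ∈ (extIter f A g n).1 ∧ a ≠ v ∧ extH f A g a ≠ f a v ∧
      extH f A g v = min (f a v) (extH f A g a) := by
  classical
  rw [extIter] at hv
  rcases hv with hv₀ | hw
  · exact absurd hv₀ hv'
  obtain ⟨a, haS, hav, hne⟩ := hw
  have hwEx : ∃ a, a ∈ (extIter f A g n).1 ∧ a ≠ v ∧ (extIter f A g n).2 a ≠ f a v :=
    ⟨a, haS, hav, hne⟩
  obtain ⟨hcS, hcv, hcne⟩ := hwEx.choose_spec
  refine ⟨hwEx.choose, hcS, hcv, ?_, ?_⟩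
  · rw [extH_eq f A g hcS]; exact hcne
  · have hmem : v ∈ (extIter f A g (n + 1)).1 := by
      rw [extIter]; exact Or.inr ⟨a, haS, hav, hne⟩
    rw [extH_eq f A g hmem, extIter, extH_eq f A g hcS]
    show (if v ∈ (extIter f A g n).1 then _ else _) = _
    rw [if_neg hv', dif_pos hwEx]

end lemmas

/-- Extending the coloring to a new vertex `b` over the determined part
`V_ω = ⋃_n V_n`: given colors `g a` of the edges `{b,a}` for `a` in a finite set `A`
such that property (3) holds on `A ∪ {b}`, there is an extension `h` of `g`
(where `h v` is the color of `{b, v}`), together with the sets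
`V₀ = A`, `V_{n+1} = {v : ∃ a ∈ V_n, h a ≠ f a v}`, such that the inductive
assignment `h v = min (f a v) (h a)` holds for EVERY witness `a` (well-definedness)
and property (3) holds on `V_ω ∪ {b}`. -/
theorem stmt9 {V M : Type*} [LinearOrder M]
    (f : V → V → M) (hsymm : ∀ a b : V, f a b = f b a)
    (h3 : Prop3On f Set.univ)
    (A : Set V) (hA : A.Finite) (g : V → M)
    -- property (3) holds on `A` together with the new vertex `b`
    (h3b : ∀ a₁ ∈ A, ∀ a₂ ∈ A, a₁ ≠ a₂ →
      (g a₁ ≠ g a₂ → f a₁ a₂ = min (g a₁) (g a₂)) ∧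
      (g a₁ = g a₂ → g a₁ < f a₁ a₂)) :
    ∃ (h : V → M) (Vseq : ℕ → Set V),
      Vseq 0 = A ∧
      (∀ n, Vseq (n + 1) = {v : V | ∃ a ∈ Vseq n, a ≠ v ∧ h a ≠ f a v}) ∧
      (∀ a ∈ A, h a = g a) ∧
      -- the assignment is independent of the chosen witness
      (∀ n, ∀ v ∈ Vseq (n + 1), ∀ a ∈ Vseq n, a ≠ v → h a ≠ f a v →
        h v = min (f a v) (h a)) ∧
      -- property (3) holds on `V_ω ∪ {b}`
      (∀ a₁ ∈ ⋃ n, Vseq n, ∀ a₂ ∈ ⋃ n, Vseq n, a₁ ≠ a₂ →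
        (h a₁ ≠ h a₂ → f a₁ a₂ = min (h a₁) (h a₂)) ∧
        (h a₁ = h a₂ → h a₁ < f a₁ a₂)) := by
  classical
  set h := extH f A g with hh
  have MTf : ∀ x y z : V, x ≠ y → x ≠ z → y ≠ z → MT (f x y) (f x z) (f y z) :=
    fun x y z hxy hxz hyz =>
      tri_iff_MT.1 (h3 x (Set.mem_univ x) y (Set.mem_univ y) z (Set.mem_univ z) hxy hxz hyz)
  -- the fundamental invariant
  have Inv : ∀ n, ∀ x ∈ (extIter f A g n).1, ∀ y ∈ (extIter f A g n).1, x ≠ y →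
      MT (h x) (h y) (f x y) := by
    intro n
    induction n with
    | zero =>
        intro x hx y hy hxy
        rw [extIter_zero] at hx hy
        have e1 : h x = g x := by
          rw [hh, extH_eq f A g (by rw [extIter_zero]; exact hx)]; rw [extIter_zero]
        have e2 : h y = g y := by
          rw [hh, extH_eq f A g (by rw [extIter_zero]; exact hy)]; rw [extIter_zero]
        rw [e1, e2]
        exact tri_iff_MT.1 (h3b x hx y hy hxy)
    | succ n IH =>
        -- key claim: new vertices against old vertices
        have claim : ∀ v ∈ (extIter f A g (n+1)).1, v ∉ (extIter f A g n).1 →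
            ∀ c ∈ (extIter f A g n).1, MT (h c) (h v) (f c v) := by
          intro v hv hv' c hc
          obtain ⟨a, haS, hav, hne, hval⟩ := extH_new f A g hv hv'
          rw [← hh] at hne hval
          have hcv : c ≠ v := fun hcv => hv' (hcv ▸ hc)
          rw [hval]
          by_cases hca : c = a
          · subst hca; exact MT.self hne
          · have t1 : MT (h a) (h c) (f a c) :=
              IH a haS c hc (fun hac => hca hac.symm)
            have t2 : MT (f a v) (f c v) (f a c) := by
              have := MTf v a c (Ne.symm hav) (Ne.symm hcv) (fun hac => hca hac.symm)
              rwa [hsymm v a, hsymm v c] at this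
            exact MT.L2 t1 t2 hne
        intro x hx y hy hxy
        by_cases hxS : x ∈ (extIter f A g n).1 <;> by_cases hyS : y ∈ (extIter f A g n).1
        · exact IH x hxS y hyS hxy
        · exact claim y hy hyS x hxS
        · have := (claim x hx hxS y hyS).swap1
          rwa [hsymm y x] at this
        · obtain ⟨a, haS, hax, hnea, hvala⟩ := extH_new f A g hx hxS
          obtain ⟨a', ha'S, ha'y, hnea', hvala'⟩ := extH_new f A g hy hyS
          rw [← hh] at hnea hvala hnea' hvala'
          have hay : a ≠ y := fun hh' => hyS (hh' ▸ haS)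
          have ha'x : a' ≠ x := fun hh' => hxS (hh' ▸ ha'S)
          by_cases hw : h a = f a y
          · by_cases hw' : h a' = f a' x
            · -- impossible configuration
              have haa' : a ≠ a' := by
                rintro rfl; exact hnea' hw
              have t1 : MT (h a) (h a') (f a a') := IH a haS a' ha'S haa'
              have t2 : MT (f a x) (f a' x) (f a a') := by
                have := MTf x a a' (Ne.symm hax) (Ne.symm ha'x) haa'
                rwa [hsymm x a, hsymm x a'] at this
              have t3 : MT (f a y) (f a' y) (f a a') := by
                have := MTf y a a' (Ne.symm hay) (Ne.symm ha'y) haa'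
                rwa [hsymm y a, hsymm y a'] at this
              rw [← hw'] at t2
              rw [← hw] at t3
              exact absurd (MT.L4 t1 t2 t3 (Ne.symm hnea) (fun hq => hnea' hq.symm)) id
            · -- both x and y are children of a'
              have hxval : h x = min (f a' x) (h a') :=
                MT.force (claim x hx hxS a' ha'S) hw'
              rw [hxval, hvala']
              have t : MT (f a' x) (f a' y) (f x y) := by
                have := MTf a' x y ha'x ha'y hxy
                exact this
              exact MT.L3 t hw' hnea'
          · -- both x and y are children of a
            have hyval : h y = min (f a y) (h a) :=
              MT.force (claim y hy hyS a haS) hw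
            rw [hvala, hyval]
            have t : MT (f a x) (f a y) (f x y) := MTf a x y hax hay hxy
            exact MT.L3 t hnea hw
  have InvAll : ∀ x y : V, (∃ n, x ∈ (extIter f A g n).1) → (∃ m, y ∈ (extIter f A g m).1) →
      x ≠ y → MT (h x) (h y) (f x y) := by
    rintro x y ⟨n, hn⟩ ⟨m, hm⟩ hxy
    exact Inv (max n m) x (extIter_mono' f A g (le_max_left n m) hn) y
      (extIter_mono' f A g (le_max_right n m) hm) hxy
  have VsubS : ∀ n, extV f A g n ⊆ (extIter f A g n).1 := by
    intro n
    induction n with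
    | zero => intro v hv; rw [extIter_zero]; exact hv
    | succ n IH =>
        rintro v ⟨a, haV, hav, hne⟩
        refine extIter_succ_mem f A g ⟨a, IH haV, hav, ?_⟩
        rwa [← extH_eq f A g (IH haV)]
  refine ⟨h, extV f A g, rfl, fun n => rfl, ?_, ?_, ?_⟩
  · intro a ha
    rw [hh, extH_eq f A g (n := 0) (by rw [extIter_zero]; exact ha), extIter_zero]
  · intro n v hv a ha hav hne
    have hvS : ∃ k, v ∈ (extIter f A g k).1 := ⟨n + 1, VsubS (n+1) hv⟩
    have haS : ∃ k, a ∈ (extIter f A g k).1 := ⟨n, VsubS n ha⟩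
    exact MT.force (InvAll a v haS hvS hav) hne
  · intro x hx y hy hxy
    rw [Set.mem_iUnion] at hx hy
    obtain ⟨n, hn⟩ := hx
    obtain ⟨m, hm⟩ := hy
    exact tri_iff_MT.2 (InvAll x y ⟨n, VsubS n hn⟩ ⟨m, VsubS m hm⟩ hxy)
end

section
/- In the setting of the previous lemma, let W = V \ V_ω = {w ∈ V : ∀a ∈ V_ω, f{a,b} = f{a,w}}. If a value f{b,w} is assigned with f{b,w} > f{b,a} for all a ∈ V₀ = A, then automatically f{b,w} > f{b,a} for all a ∈ V_ω. -/
/-- In the extension step, if the new color `f{b,w} = m` is chosen above `f{b,a}`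
for all `a ∈ V₀ = A`, then automatically `m > f{b,a}` for all `a ∈ V_ω`.
Here `h a` denotes the color `f{b,a}` of the edge from the new vertex `b` to `a`. -/
theorem stmt10 {V M : Type*} [LinearOrder M]
    (f : V → V → M) (hsymm : ∀ a b : V, f a b = f b a)
    (h3 : Prop3On f Set.univ)
    (A : Set V) (hA : A.Finite) (h : V → M) (Vseq : ℕ → Set V)
    (h0 : Vseq 0 = A)
    (hstep : ∀ n, Vseq (n + 1) = {v : V | ∃ a ∈ Vseq n, a ≠ v ∧ h a ≠ f a v})
    -- the inductive rule defining the colors of edges from `b` into `V_ω`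
    (hrule : ∀ n, ∀ v ∈ Vseq (n + 1), ∀ a ∈ Vseq n, a ≠ v → h a ≠ f a v →
      h v = min (f a v) (h a)) :
    ∀ m : M, (∀ a ∈ Vseq 0, h a < m) → ∀ a ∈ ⋃ n, Vseq n, h a < m := by
  intro m hm a ha
  obtain ⟨n, hn⟩ := Set.mem_iUnion.mp ha
  clear ha
  induction n generalizing a with
  | zero => exact hm a hn
  | succ n ih =>
    rw [hstep n] at hn
    obtain ⟨x, hx, hxa, hfx⟩ := hn
    have := hrule n a (by rw [hstep n]; exact ⟨x, hx, hxa, hfx⟩) x hx hxa hfx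
    calc h a = min (f x a) (h x) := this
      _ ≤ h x := min_le_right _ _
      _ < m := ih x hx
end

section
/- Erdős–Rado for triangles: for any infinite cardinal λ and any coloring c : [X]² → λ of pairs from a set X with |X| ≥ (2^λ)⁺, there exist three distinct elements a, b, c ∈ X with all three pairs receiving the same color. -/
open Cardinal Set

universe u

namespace ER16

variable {X C L : Type u}

/-- Choose, if possible, an element `y` avoiding the range of `f` and having
prescribed color `t i` with each `f i`; otherwise return `x₀`. -/
noncomputable def pick (c : X → X → C) (x₀ : X) (f : L → X) (t : L → C) : X :=
  letI := Classical.propDecidable (∃ y, y ∉ Set.range f ∧ ∀ i, c (f i) y = t i)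
  if h : ∃ y, y ∉ Set.range f ∧ ∀ i, c (f i) y = t i then h.choose else x₀

theorem pick_spec {c : X → X → C} {x₀ : X} {f : L → X} {t : L → C}
    (h : ∃ y, y ∉ Set.range f ∧ ∀ i, c (f i) y = t i) :
    pick c x₀ f t ∉ Set.range f ∧ ∀ i, c (f i) (pick c x₀ f t) = t i := by
  rw [pick]
  rw [dif_pos h]
  exact h.choose_spec

/-- One closure step: add a realizer for every `L`-indexed type over `S`. -/
noncomputable def step (L : Type u) (c : X → X → C) (x₀ : X) (S : Set X) : Set X :=
  insert x₀ S ∪ (fun p : (L → X) × (L → C) => pick c x₀ p.1 p.2) '' {p | ∀ i, p.1 i ∈ S}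

theorem subset_step {c : X → X → C} {x₀ : X} {S : Set X} : S ⊆ step L c x₀ S :=
  (Set.subset_insert _ _).trans Set.subset_union_left

theorem mem_step_self {c : X → X → C} {x₀ : X} {S : Set X} : x₀ ∈ step L c x₀ S :=
  Set.subset_union_left (Set.mem_insert _ _)

theorem pick_mem_step {c : X → X → C} {x₀ : X} {S : Set X} {f : L → X} {t : L → C}
    (hf : ∀ i, f i ∈ S) : pick c x₀ f t ∈ step L c x₀ S :=
  Set.subset_union_right ⟨(f, t), hf, rfl⟩

theorem mk_step_le {lam : Cardinal.{u}} (hlam : ℵ₀ ≤ lam) (hL : #L = lam) (hC : #C ≤ lam)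
    {c : X → X → C} {x₀ : X} {S : Set X} (hS : #S ≤ 2 ^ lam) :
    #(step L c x₀ S : Set X) ≤ 2 ^ lam := by
  have hk : ℵ₀ ≤ 2 ^ lam := hlam.trans (cantor lam).le
  have h1 : #(insert x₀ S : Set X) ≤ 2 ^ lam := by
    refine (mk_insert_le).trans ?_
    exact (add_le_add hS le_rfl).trans (by rw [add_one_eq hk])
  have h2 : #({p : (L → X) × (L → C) | ∀ i, p.1 i ∈ S}) ≤ 2 ^ lam := by
    have hinj : #({p : (L → X) × (L → C) | ∀ i, p.1 i ∈ S}) ≤ #((L → S) × (L → C)) := by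
      refine mk_le_of_injective (f := fun p => (fun i => ⟨p.1.1 i, p.2 i⟩, p.1.2)) ?_
      rintro ⟨⟨f, t⟩, hf⟩ ⟨⟨f', t'⟩, hf'⟩ h
      simp only [Prod.mk.injEq, funext_iff, Subtype.mk.injEq] at h
      exact Subtype.ext (Prod.ext_iff.mpr ⟨funext fun i => h.1 i, funext fun i => h.2 i⟩)
    refine hinj.trans ?_
    simp only [mk_prod, mk_arrow, lift_id]
    rw [hL]
    have e1 : (#S) ^ lam ≤ 2 ^ lam := by
      calc (#S) ^ lam ≤ (2 ^ lam) ^ lam := power_le_power_right hS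
        _ = 2 ^ (lam * lam) := by rw [← power_mul]
        _ = 2 ^ lam := by rw [mul_eq_self hlam]
    have e2 : (#C) ^ lam ≤ 2 ^ lam := by
      calc (#C) ^ lam ≤ (2 ^ lam) ^ lam := power_le_power_right (hC.trans (cantor lam).le)
        _ = 2 ^ (lam * lam) := by rw [← power_mul]
        _ = 2 ^ lam := by rw [mul_eq_self hlam]
    calc (#S) ^ lam * (#C) ^ lam ≤ (2 ^ lam) * (2 ^ lam) := mul_le_mul' e1 e2
      _ = 2 ^ lam := mul_eq_self hk
  calc #(step L c x₀ S : Set X) ≤ #(insert x₀ S : Set X) + #({p : (L → X) × (L → C) | ∀ i, p.1 i ∈ S}) :=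
        (mk_union_le _ _).trans (add_le_add le_rfl (mk_image_le))
    _ ≤ 2 ^ lam + 2 ^ lam := add_le_add h1 h2
    _ = 2 ^ lam := add_eq_self hk


noncomputable def chain (L : Type u) (c : X → X → C) (x₀ : X) (o : Ordinal.{u}) : Set X :=
  step L c x₀ (⋃ b : Set.Iio o, chain L c x₀ b.1)
termination_by o
decreasing_by exact b.2

noncomputable def chainUnion (L : Type u) (c : X → X → C) (x₀ : X) (o : Ordinal.{u}) : Set X :=
  ⋃ b : Set.Iio o, chain L c x₀ b.1

theorem chainUnion_eq (c : X → X → C) (x₀ : X) (o : Ordinal.{u}) :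
    chainUnion L c x₀ o = ⋃ i : o.ToType, chain L c x₀ ((Ordinal.ToType.mk (o := o)).symm i).1 := by
  apply Set.Subset.antisymm
  · rintro x hx
    obtain ⟨b, hb⟩ := Set.mem_iUnion.mp hx
    exact Set.mem_iUnion.mpr ⟨Ordinal.ToType.mk (o := o) b, by simp [hb]⟩
  · rintro x hx
    obtain ⟨i, hi⟩ := Set.mem_iUnion.mp hx
    exact Set.mem_iUnion.mpr ⟨_, hi⟩

theorem chain_eq (c : X → X → C) (x₀ : X) (o : Ordinal.{u}) :
    chain L c x₀ o = step L c x₀ (chainUnion L c x₀ o) := by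
  rw [chain]; rfl

theorem chain_subset_chainUnion {c : X → X → C} {x₀ : X} {b o : Ordinal.{u}} (h : b < o) :
    chain L c x₀ b ⊆ chainUnion L c x₀ o :=
  Set.subset_iUnion (fun b' : Set.Iio o => chain L c x₀ b'.1) ⟨b, h⟩

theorem chainUnion_subset_chain {c : X → X → C} {x₀ : X} {o : Ordinal.{u}} :
    chainUnion L c x₀ o ⊆ chain L c x₀ o := by
  rw [chain_eq]; exact subset_step

theorem chain_mono {c : X → X → C} {x₀ : X} {b o : Ordinal.{u}} (h : b ≤ o) :
    chain L c x₀ b ⊆ chain L c x₀ o := by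
  rcases eq_or_lt_of_le h with rfl | h
  · exact le_rfl
  · exact (chain_subset_chainUnion h).trans chainUnion_subset_chain

/-- Enumeration of `g`'s values (plus padding `x₀`) indexed by `L`. -/
noncomputable def fenum (x₀ : X) (L : Type u) (o : Ordinal.{u}) (g : Set.Iio o → X) : L → X :=
  if h : #(Option o.ToType) ≤ #L then
    letI e := ((Cardinal.le_def _ _).mp h).some
    fun i =>
      letI := Classical.propDecidable (∃ b, e b = i)
      if hb : ∃ b, e b = i then
        hb.choose.elim x₀ (fun j => g ((Ordinal.ToType.mk (o := o)).symm j))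
      else x₀
  else fun _ => x₀

theorem fenum_range {x₀ : X} {o : Ordinal.{u}} {g : Set.Iio o → X} (i : L) :
    fenum x₀ L o g i ∈ insert x₀ (Set.range g) := by
  rw [fenum]
  split
  · dsimp only
    split
    · rename_i hb
      cases hb.choose with
      | none => exact Set.mem_insert _ _
      | some j => exact Set.mem_insert_of_mem _ ⟨_, rfl⟩
    · exact Set.mem_insert _ _
  · exact Set.mem_insert _ _

theorem fenum_surj {x₀ : X} {o : Ordinal.{u}} {g : Set.Iio o → X}
    (h : #(Option o.ToType) ≤ #L) (b : Set.Iio o) :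
    g b ∈ Set.range (fenum x₀ L o g) := by
  rw [fenum, dif_pos h]
  set e := ((Cardinal.le_def (Option o.ToType) L).mp h).some with he
  refine ⟨e (some (Ordinal.ToType.mk (o := o) b)), ?_⟩
  have hb : ∃ b', e b' = e (some (Ordinal.ToType.mk (o := o) b)) := ⟨_, rfl⟩
  dsimp only
  rw [dif_pos hb]
  have : hb.choose = some (Ordinal.ToType.mk (o := o) b) := e.injective hb.choose_spec
  rw [this]
  simp


noncomputable def seq (L : Type u) (c : X → X → C) (x₀ : X) (a : X) (o : Ordinal.{u}) : X :=
  pick c x₀ (fenum x₀ L o (fun b => seq L c x₀ a b.1))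
    (fun i => c (fenum x₀ L o (fun b => seq L c x₀ a b.1) i) a)
termination_by o
decreasing_by all_goals exact b.2

theorem seq_eq (c : X → X → C) (x₀ a : X) (o : Ordinal.{u}) :
    seq L c x₀ a o = pick c x₀ (fenum x₀ L o (fun b => seq L c x₀ a b.1))
      (fun i => c (fenum x₀ L o (fun b => seq L c x₀ a b.1) i) a) := by
  rw [seq]


theorem mk_chain_le {lam : Cardinal.{u}} (hlam : ℵ₀ ≤ lam) (hL : #L = lam) (hC : #C ≤ lam)
    (c : X → X → C) (x₀ : X) :
    ∀ o : Ordinal.{u}, o.card ≤ 2 ^ lam →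
      #(chainUnion L c x₀ o : Set X) ≤ 2 ^ lam ∧ #(chain L c x₀ o : Set X) ≤ 2 ^ lam := by
  intro o
  induction o using Ordinal.induction with
  | _ o IH =>
  intro ho
  have hk : ℵ₀ ≤ 2 ^ lam := hlam.trans (cantor lam).le
  have hU : #(chainUnion L c x₀ o : Set X) ≤ 2 ^ lam := by
    rw [chainUnion_eq]
    refine (mk_iUnion_le _).trans ?_
    have hsup : ⨆ i : o.ToType, #(chain L c x₀ ((Ordinal.ToType.mk (o := o)).symm i).1 : Set X)
        ≤ 2 ^ lam := by
      refine ciSup_le' fun i => ?_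
      have hb := ((Ordinal.ToType.mk (o := o)).symm i).2
      exact (IH _ hb ((Ordinal.card_le_card hb.le).trans ho)).2
    calc #o.ToType * ⨆ i : o.ToType, #(chain L c x₀ ((Ordinal.ToType.mk (o := o)).symm i).1 : Set X)
        ≤ (2 ^ lam) * (2 ^ lam) := by
          refine mul_le_mul' ?_ hsup
          rw [Cardinal.mk_toType]; exact ho
      _ = 2 ^ lam := mul_eq_self hk
  exact ⟨hU, by rw [chain_eq]; exact mk_step_le hlam hL hC hU⟩

theorem mem_chainUnion {c : X → X → C} {x₀ : X} {o : Ordinal.{u}} {x : X} :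
    x ∈ chainUnion L c x₀ o ↔ ∃ b, b < o ∧ x ∈ chain L c x₀ b := by
  simp [chainUnion, Set.mem_iUnion, Subtype.exists]

end ER16

/-- Erdős–Rado for triangles, `ℶ₁(λ)⁺ → (3)²_λ`: any symmetric coloring of pairs from
a set of size at least `(2^λ)⁺` with at most `λ` colors (`λ` infinite) admits three
distinct elements all of whose pairs get the same color. -/
theorem stmt16 {X C : Type u} (lam : Cardinal.{u}) (hlam : Cardinal.aleph0 ≤ lam)
    (hC : Cardinal.mk C ≤ lam)
    (hX : Order.succ (2 ^ lam) ≤ Cardinal.mk X)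
    (c : X → X → C) (hsymm : ∀ a b : X, c a b = c b a) :
    ∃ a b d : X, a ≠ b ∧ a ≠ d ∧ b ≠ d ∧ c a b = c b d ∧ c a b = c a d := by
  classical
  open ER16 Cardinal in
  have h2X : 2 ^ lam < #X := lt_of_lt_of_le (Order.lt_succ _) hX
  haveI : Nonempty X := mk_ne_zero_iff.mp (ne_of_gt (zero_le.trans_lt h2X))
  set L : Type u := lam.out with hLdef
  have hL : #L = lam := mk_out lam
  set x₀ : X := Classical.arbitrary X
  set Λ : Ordinal.{u} := (Order.succ lam).ord with hΛdef
  have hΛcard : Λ.card = Order.succ lam := card_ord _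
  have hsucc_le : Order.succ lam ≤ 2 ^ lam := Order.succ_le_of_lt (cantor lam)
  have hAle : #(chainUnion L c x₀ Λ : Set X) ≤ 2 ^ lam :=
    (mk_chain_le hlam hL hC c x₀ Λ (by rw [hΛcard]; exact hsucc_le)).1
  set A : Set X := chainUnion L c x₀ Λ with hAdef
  obtain ⟨a, ha⟩ : ∃ a : X, a ∉ A := by
    by_contra h
    push_neg at h
    have huniv : A = Set.univ := Set.eq_univ_iff_forall.mpr h
    rw [huniv, mk_univ] at hAle
    exact absurd hAle (not_le.mpr h2X)
  have hΛpos : (0 : Ordinal) < Λ := by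
    rcases eq_zero_or_pos Λ with h | h
    · exfalso
      have := hΛcard
      rw [h, Ordinal.card_zero] at this
      exact (Order.succ_ne_bot lam) (by simpa using this.symm)
    · exact h
  have hx₀A : x₀ ∈ A :=
    chain_subset_chainUnion hΛpos (by rw [chain_eq]; exact mem_step_self)
  have hlimit : Order.IsSuccLimit Λ := Cardinal.isSuccLimit_ord (hlam.trans (Order.le_succ lam))
  have hcof : Λ.cof = Order.succ lam := (isRegular_succ hlam).cof_eq
  have hopt : ∀ o < Λ, #(Option o.ToType) ≤ #L := by
    intro o ho
    rw [mk_option, Cardinal.mk_toType, hL]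
    have h2 : o.card ≤ lam := Order.lt_succ_iff.mp (lt_ord.mp ho)
    calc o.card + 1 ≤ lam + 1 := add_le_add h2 le_rfl
      _ = lam := add_one_eq hlam
  have key : ∀ o, o < Λ →
      (∃ γ, γ < Λ ∧ seq L c x₀ a o ∈ chain L c x₀ γ) ∧
      (∀ b, b < o → c (seq L c x₀ a b) (seq L c x₀ a o) = c (seq L c x₀ a b) a ∧
        seq L c x₀ a o ≠ seq L c x₀ a b) := by
    intro o
    induction o using Ordinal.induction with
    | _ o IH =>
    intro ho
    set f : L → X := fenum x₀ L o (fun b => seq L c x₀ a b.1) with hf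
    have hfA : ∀ i, f i ∈ A := by
      intro i
      rcases Set.mem_insert_iff.mp (fenum_range (g := fun b : Set.Iio o => seq L c x₀ a b.1) i)
        with h | ⟨b, hb⟩
      · exact (show f i = x₀ from h) ▸ hx₀A
      · obtain ⟨γ, hγ, hmem⟩ := (IH b.1 b.2 (b.2.trans ho)).1
        exact (show f i = seq L c x₀ a b.1 from hb.symm) ▸ chain_subset_chainUnion hγ hmem
    have hreal : ∃ y, y ∉ Set.range f ∧ ∀ i, c (f i) y = c (f i) a :=
      ⟨a, fun ⟨i, hi⟩ => ha (hi ▸ hfA i), fun i => rfl⟩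
    have hspec := pick_spec (x₀ := x₀) hreal
    have hseq : seq L c x₀ a o = pick c x₀ f (fun i => c (f i) a) := seq_eq c x₀ a o
    constructor
    · have hch : ∀ i : L, ∃ γ, γ < Λ ∧ f i ∈ chain L c x₀ γ := fun i =>
        mem_chainUnion.mp (hfA i)
      choose γ hγlt hγmem using hch
      have hsup : (⨆ i, γ i) < Λ :=
        Ordinal.iSup_lt_ord (by rw [hcof, hL]; exact Order.lt_succ lam) hγlt
      refine ⟨Order.succ (⨆ i, γ i), hlimit.succ_lt hsup, ?_⟩
      rw [hseq, chain_eq]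
      apply pick_mem_step
      intro i
      exact chain_subset_chainUnion (Order.lt_succ _)
        (chain_mono (Ordinal.le_iSup γ i) (hγmem i))
    · intro b hb
      obtain ⟨i, hi⟩ := fenum_surj (x₀ := x₀) (g := fun b : Set.Iio o => seq L c x₀ a b.1)
        (hopt o ho) ⟨b, hb⟩
      have hi' : f i = seq L c x₀ a b := hi
      constructor
      · have hcolor := hspec.2 i
        rw [hi'] at hcolor
        rw [hseq]
        exact hcolor
      · intro heq
        exact hspec.1 ⟨i, by rw [hi', ← hseq, heq]⟩
  -- pigeonhole on colors towards `a`
  have hninj : ¬ Function.Injective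
      (fun i : Λ.ToType => c (seq L c x₀ a ((Ordinal.ToType.mk (o := Λ)).symm i).1) a) := by
    intro hinj
    have hle : #(Λ.ToType) ≤ #C := mk_le_of_injective hinj
    rw [Cardinal.mk_toType, hΛcard] at hle
    exact absurd (hle.trans hC) (not_le.mpr (Order.lt_succ lam))
  rw [Function.not_injective_iff] at hninj
  obtain ⟨i, j, hFij, hij⟩ := hninj
  have main : ∀ u v : Set.Iio Λ, u.1 < v.1 →
      c (seq L c x₀ a u.1) a = c (seq L c x₀ a v.1) a →
      ∃ a' b' d' : X, a' ≠ b' ∧ a' ≠ d' ∧ b' ≠ d' ∧ c a' b' = c b' d' ∧ c a' b' = c a' d' := by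
    intro u v hlt hceq
    set b1 := seq L c x₀ a u.1
    set b2 := seq L c x₀ a v.1
    have k2 := (key v.1 v.2).2 u.1 hlt
    have hb1A : b1 ∈ A := by
      obtain ⟨γ, hγ, hm⟩ := (key u.1 u.2).1
      exact chain_subset_chainUnion hγ hm
    have hb2A : b2 ∈ A := by
      obtain ⟨γ, hγ, hm⟩ := (key v.1 v.2).1
      exact chain_subset_chainUnion hγ hm
    refine ⟨b1, b2, a, k2.2.symm, fun h => ha (h ▸ hb1A), fun h => ha (h ▸ hb2A), ?_, k2.1⟩
    rw [k2.1, hceq]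
  have hone : ((Ordinal.ToType.mk (o := Λ)).symm i).1 ≠ ((Ordinal.ToType.mk (o := Λ)).symm j).1 := by
    intro h
    exact hij ((Ordinal.ToType.mk (o := Λ)).symm.injective (Subtype.ext h))
  rcases hone.lt_or_gt with h | h
  · exact main _ _ h hFij
  · exact main _ _ h hFij.symm
end
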